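/- arXiv:2509.14852 — 2 statements merged into one kernel-verified Lean document; each statement's English description precedes it below -/
import Mathlib

section
/- Let γ ∈ [0,1]. For every pair (ρ₀, ρ₁) of qubit density matrices, the difference D = N_γ(ρ₀) − N_γ(ρ₁) is a Hermitian 2×2 matrix whose eigenvalues λ₁, λ₂ satisfy |λ₁| + |λ₂| ≤ 2·√(1−γ); moreover, equality holds when ρ₀ = ρ₊ and ρ₁ = ρ₋. -/
open Matrix Complex
open scoped ComplexOrder

/-- Kraus operator `K₀` of the qubit amplitude damping channel. -/
noncomputable def K₀ (γ : ℝ) : Matrix (Fin 2) (Fin 2) ℂ :=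
  !![1, 0; 0, (Real.sqrt (1 - γ) : ℂ)]

/-- Kraus operator `K₁` of the qubit amplitude damping channel. -/
noncomputable def K₁ (γ : ℝ) : Matrix (Fin 2) (Fin 2) ℂ :=
  !![0, (Real.sqrt γ : ℂ); 0, 0]

/-- The qubit amplitude damping channel with damping parameter `γ`. -/
noncomputable def ADC (γ : ℝ) (ρ : Matrix (Fin 2) (Fin 2) ℂ) : Matrix (Fin 2) (Fin 2) ℂ :=
  K₀ γ * ρ * (K₀ γ)ᴴ + K₁ γ * ρ * (K₁ γ)ᴴ

/-- The state `ρ₊ = |+⟩⟨+|`. -/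
noncomputable def ρPlus : Matrix (Fin 2) (Fin 2) ℂ := (1/2 : ℂ) • !![1, 1; 1, 1]

/-- The state `ρ₋ = |−⟩⟨−|`. -/
noncomputable def ρMinus : Matrix (Fin 2) (Fin 2) ℂ := (1/2 : ℂ) • !![1, -1; -1, 1]

lemma trace_eq_sum_eig {M : Matrix (Fin 2) (Fin 2) ℂ} (hM : M.IsHermitian) :
    M.trace = ∑ i, (hM.eigenvalues i : ℂ) := by
  conv_lhs => rw [hM.spectral_theorem]
  rw [Unitary.conjStarAlgAut_apply]
  rw [Matrix.trace_mul_cycle]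
  rw [show star (hM.eigenvectorUnitary : Matrix (Fin 2) (Fin 2) ℂ) *
      (hM.eigenvectorUnitary : Matrix (Fin 2) (Fin 2) ℂ) = 1 from
    Matrix.mem_unitaryGroup_iff'.mp hM.eigenvectorUnitary.2]
  rw [one_mul, Matrix.trace_diagonal]
  rfl

lemma sum_abs_eig {M : Matrix (Fin 2) (Fin 2) ℂ} (hM : M.IsHermitian) (hT : M.trace = 0) :
    ∑ i, |hM.eigenvalues i| = 2 * Real.sqrt (-(M.det.re)) := by
  have h1 : (hM.eigenvalues 0 : ℂ) + hM.eigenvalues 1 = 0 := by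
    rw [← Fin.sum_univ_two fun i => (hM.eigenvalues i : ℂ), ← trace_eq_sum_eig hM, hT]
  have h1' : hM.eigenvalues 1 = - hM.eigenvalues 0 := by
    have := congrArg Complex.re h1
    simp at this; linarith
  have h2 : M.det = (hM.eigenvalues 0 : ℂ) * hM.eigenvalues 1 := by
    rw [hM.det_eq_prod_eigenvalues, Fin.prod_univ_two]; rfl
  have h3 : M.det.re = -(hM.eigenvalues 0)^2 := by
    rw [h2, h1']; push_cast; ring_nf; simp [pow_two]
  rw [Fin.sum_univ_two, h1', h3, abs_neg, neg_neg, Real.sqrt_sq_eq_abs]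
  ring

lemma ADC_eq (γ : ℝ) (hγ0 : 0 ≤ γ) (hγ1 : γ ≤ 1) (ρ : Matrix (Fin 2) (Fin 2) ℂ) :
    ADC γ ρ = !![ρ 0 0 + (γ:ℂ) * ρ 1 1, (Real.sqrt (1-γ):ℂ) * ρ 0 1;
                 (Real.sqrt (1-γ):ℂ) * ρ 1 0, ((1-γ:ℝ):ℂ) * ρ 1 1] := by
  have hK0 : (K₀ γ)ᴴ = K₀ γ := by
    ext i j; fin_cases i <;> fin_cases j <;> simp [K₀, Complex.conj_ofReal]
  have hK1 : (K₁ γ)ᴴ = !![0, 0; (Real.sqrt γ : ℂ), 0] := by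
    ext i j; fin_cases i <;> fin_cases j <;> simp [K₁, Complex.conj_ofReal]
  rw [ADC, hK0, hK1, K₀, K₁, Matrix.eta_fin_two ρ]
  rw [Matrix.mul_fin_two, Matrix.mul_fin_two, Matrix.mul_fin_two, Matrix.mul_fin_two]
  ext i j
  fin_cases i <;> fin_cases j <;> simp <;> ring_nf <;>
    simp only [← Complex.ofReal_pow, Real.sq_sqrt hγ0,
      Real.sq_sqrt (show (0:ℝ) ≤ 1 - γ by linarith), Complex.ofReal_sub,
      Complex.ofReal_one] <;> ring

lemma ADC_herm (γ : ℝ) {ρ : Matrix (Fin 2) (Fin 2) ℂ} (h : ρ.IsHermitian) :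
    (ADC γ ρ).IsHermitian := by
  unfold ADC
  exact (Matrix.isHermitian_mul_mul_conjTranspose _ h).add
    (Matrix.isHermitian_mul_mul_conjTranspose _ h)

lemma ADC_trace (γ : ℝ) (hγ0 : 0 ≤ γ) (hγ1 : γ ≤ 1) (ρ : Matrix (Fin 2) (Fin 2) ℂ) :
    (ADC γ ρ).trace = ρ.trace := by
  rw [ADC_eq γ hγ0 hγ1, Matrix.trace_fin_two, Matrix.trace_fin_two]
  simp; push_cast; ring

lemma key_ineq (x y p q : ℝ) (hx0 : 0 ≤ x) (hx1 : x ≤ 1) (hy0 : 0 ≤ y) (hy1 : y ≤ 1)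
    (hp : 0 ≤ p) (hq : 0 ≤ q) (hp2 : p^2 ≤ (1-x)*x) (hq2 : q^2 ≤ (1-y)*y) :
    (x-y)^2 + (p+q)^2 ≤ 1 := by
  have h1 : (p*q)^2 ≤ ((1-x)*x) * ((1-y)*y) := by
    calc (p*q)^2 = p^2 * q^2 := by ring
    _ ≤ ((1-x)*x) * ((1-y)*y) := by
        apply mul_le_mul hp2 hq2 (sq_nonneg q) (by nlinarith)
  have h2 : 2*(p*q) ≤ (1-x)*(1-y) + x*y := by
    nlinarith [sq_nonneg ((1-x)*(1-y) - x*y), sq_nonneg ((1-x)*(1-y) + x*y - 2*(p*q)),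
      mul_nonneg hp hq, mul_nonneg (mul_nonneg (by linarith : (0:ℝ) ≤ 1-x)
        (by linarith : (0:ℝ) ≤ 1-y)) (mul_nonneg hx0 hy0)]
  nlinarith

lemma entry_facts {ρ : Matrix (Fin 2) (Fin 2) ℂ} (hρ : ρ.PosSemidef) (ht : ρ.trace = 1) :
    ∃ x : ℝ, 0 ≤ x ∧ x ≤ 1 ∧ ρ 1 1 = (x:ℂ) ∧ ρ 0 0 = ((1-x:ℝ):ℂ) ∧
      ρ 1 0 = (starRingEnd ℂ) (ρ 0 1) ∧ Complex.normSq (ρ 0 1) ≤ (1-x)*x := by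
  have h11 : 0 ≤ ρ 1 1 := by
    have := hρ.dotProduct_mulVec_nonneg (Pi.single 1 1)
    simpa [dotProduct, Matrix.mulVec, Fin.sum_univ_two, Pi.single_apply] using this
  have h00 : 0 ≤ ρ 0 0 := by
    have := hρ.dotProduct_mulVec_nonneg (Pi.single 0 1)
    simpa [dotProduct, Matrix.mulVec, Fin.sum_univ_two, Pi.single_apply] using this
  obtain ⟨h11re, h11im⟩ := Complex.nonneg_iff.mp h11
  obtain ⟨h00re, h00im⟩ := Complex.nonneg_iff.mp h00
  have htr : ρ 0 0 + ρ 1 1 = 1 := by rw [← Matrix.trace_fin_two]; exact ht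
  have htre : (ρ 0 0).re + (ρ 1 1).re = 1 := by
    have := congrArg Complex.re htr; simpa using this
  have hx11 : ρ 1 1 = ((ρ 1 1).re : ℂ) := Complex.ext (by simp) (by simp [← h11im])
  have hx00 : ρ 0 0 = ((1-(ρ 1 1).re : ℝ) : ℂ) :=
    Complex.ext (by simp; linarith) (by simp [← h00im])
  have hconj : ρ 1 0 = (starRingEnd ℂ) (ρ 0 1) := by
    conv_lhs => rw [← hρ.1]
    simp [Matrix.conjTranspose_apply, Complex.star_def]
  have hdeteq : ρ.det = ((∏ i, hρ.1.eigenvalues i : ℝ) : ℂ) := by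
    rw [hρ.1.det_eq_prod_eigenvalues]; push_cast; rfl
  have hdetnn : 0 ≤ (ρ.det).re := by
    rw [hdeteq, Complex.ofReal_re]
    exact Finset.prod_nonneg fun i _ => hρ.eigenvalues_nonneg i
  have hdf : ρ.det = (((1 - (ρ 1 1).re) * (ρ 1 1).re - Complex.normSq (ρ 0 1) : ℝ) : ℂ) := by
    rw [Matrix.det_fin_two, hconj, Complex.mul_conj, hx11, hx00]
    push_cast [Complex.ofReal_re]; ring
  rw [hdf, Complex.ofReal_re] at hdetnn
  exact ⟨(ρ 1 1).re, h11re, by linarith, hx11, hx00, hconj, by linarith⟩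

/-- For `γ ∈ [0,1]` and qubit density matrices `ρ₀, ρ₁`, the difference
`D = N_γ(ρ₀) − N_γ(ρ₁)` is Hermitian, the sum of the absolute values of its eigenvalues
(its trace norm) is at most `2√(1−γ)`, and equality holds for `ρ₀ = ρ₊`, `ρ₁ = ρ₋`. -/
theorem stmt3 (γ : ℝ) (hγ0 : 0 ≤ γ) (hγ1 : γ ≤ 1)
    (ρ₀ ρ₁ : Matrix (Fin 2) (Fin 2) ℂ)
    (hρ₀ : ρ₀.PosSemidef) (hρ₀t : ρ₀.trace = 1)
    (hρ₁ : ρ₁.PosSemidef) (hρ₁t : ρ₁.trace = 1) :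
    (ADC γ ρ₀ - ADC γ ρ₁).IsHermitian ∧
    (∀ hD : (ADC γ ρ₀ - ADC γ ρ₁).IsHermitian,
      ∑ i, |hD.eigenvalues i| ≤ 2 * Real.sqrt (1 - γ)) ∧
    (∀ hE : (ADC γ ρPlus - ADC γ ρMinus).IsHermitian,
      ∑ i, |hE.eigenvalues i| = 2 * Real.sqrt (1 - γ)) := by
  have h1γ : (0:ℝ) ≤ 1 - γ := by linarith
  have hs : ((Real.sqrt (1-γ):ℂ)) * (Real.sqrt (1-γ):ℂ) = 1 - (γ:ℂ) := by
    have : (Real.sqrt (1-γ)) * (Real.sqrt (1-γ)) = 1 - γ := Real.mul_self_sqrt h1γ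
    calc ((Real.sqrt (1-γ):ℂ)) * (Real.sqrt (1-γ):ℂ) = (((Real.sqrt (1-γ)) * (Real.sqrt (1-γ)) : ℝ) : ℂ) := by push_cast; ring
    _ = 1 - (γ:ℂ) := by rw [this]; push_cast; ring
  refine ⟨(ADC_herm γ hρ₀.1).sub (ADC_herm γ hρ₁.1), ?_, ?_⟩
  · intro hD
    obtain ⟨x, hx0, hx1, hx11, hx00, hxc, hxn⟩ := entry_facts hρ₀ hρ₀t
    obtain ⟨y, hy0, hy1, hy11, hy00, hyc, hyn⟩ := entry_facts hρ₁ hρ₁t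
    have htr : (ADC γ ρ₀ - ADC γ ρ₁).trace = 0 := by
      rw [Matrix.trace_sub, ADC_trace γ hγ0 hγ1, ADC_trace γ hγ0 hγ1, hρ₀t, hρ₁t, sub_self]
    have hdet : (ADC γ ρ₀ - ADC γ ρ₁).det
        = ((-((1-γ)*((1-γ)*(x-y)^2 + Complex.normSq (ρ₀ 0 1 - ρ₁ 0 1))) : ℝ) : ℂ) := by
      rw [ADC_eq γ hγ0 hγ1 ρ₀, ADC_eq γ hγ0 hγ1 ρ₁, Matrix.det_fin_two]
      simp [Matrix.sub_apply]
      rw [hx11, hx00, hy11, hy00, hxc, hyc]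
      push_cast [map_sub]
      rw [show ((Complex.normSq (ρ₀ 0 1 - ρ₁ 0 1) : ℝ):ℂ)
          = (ρ₀ 0 1 - ρ₁ 0 1) * (starRingEnd ℂ) (ρ₀ 0 1 - ρ₁ 0 1) from
        (Complex.mul_conj _).symm]
      push_cast [map_sub]
      linear_combination (-(ρ₀ 0 1 - ρ₁ 0 1) *
        ((starRingEnd ℂ) (ρ₀ 0 1) - (starRingEnd ℂ) (ρ₁ 0 1))) * hs
    rw [sum_abs_eig hD htr, hdet, Complex.ofReal_re, neg_neg]
    have habs : ‖ρ₀ 0 1 - ρ₁ 0 1‖ ≤ ‖ρ₀ 0 1‖ + ‖ρ₁ 0 1‖ := by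
      simpa [sub_eq_add_neg] using norm_add_le (ρ₀ 0 1) (-(ρ₁ 0 1))
    have hb : Complex.normSq (ρ₀ 0 1 - ρ₁ 0 1)
        ≤ (‖ρ₀ 0 1‖ + ‖ρ₁ 0 1‖)^2 := by
      rw [← Complex.sq_norm]
      exact pow_le_pow_left₀ (norm_nonneg _) habs 2
    have hk := key_ineq x y (‖ρ₀ 0 1‖) (‖ρ₁ 0 1‖) hx0 hx1 hy0 hy1
      (norm_nonneg _) (norm_nonneg _)
      (by rw [Complex.sq_norm]; exact hxn) (by rw [Complex.sq_norm]; exact hyn)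
    have hmono : (1-γ)*((1-γ)*(x-y)^2 + Complex.normSq (ρ₀ 0 1 - ρ₁ 0 1)) ≤ (1-γ) := by
      have hinner : (1-γ)*(x-y)^2 + Complex.normSq (ρ₀ 0 1 - ρ₁ 0 1) ≤ 1 := by
        nlinarith [sq_nonneg (x-y), Complex.normSq_nonneg (ρ₀ 0 1 - ρ₁ 0 1)]
      nlinarith [Complex.normSq_nonneg (ρ₀ 0 1 - ρ₁ 0 1), sq_nonneg (x-y)]
    have := Real.sqrt_le_sqrt hmono
    linarith
  · intro hE
    have htrP : (ρPlus).trace = 1 := by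
      simp [ρPlus, Matrix.trace_fin_two]; norm_num
    have htrM : (ρMinus).trace = 1 := by
      simp [ρMinus, Matrix.trace_fin_two]; norm_num
    have htr : (ADC γ ρPlus - ADC γ ρMinus).trace = 0 := by
      rw [Matrix.trace_sub, ADC_trace γ hγ0 hγ1, ADC_trace γ hγ0 hγ1, htrP, htrM, sub_self]
    have hdet : (ADC γ ρPlus - ADC γ ρMinus).det = ((-(1-γ) : ℝ) : ℂ) := by
      rw [ADC_eq γ hγ0 hγ1 ρPlus, ADC_eq γ hγ0 hγ1 ρMinus, Matrix.det_fin_two]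
      simp [ρPlus, ρMinus, Matrix.sub_apply]
      push_cast
      linear_combination -hs
    rw [sum_abs_eig hE htr, hdet, Complex.ofReal_re, neg_neg]
end

section
/- (Theorem: uncoded collective optimum equals individual-measurement performance) Let γ ∈ [0,1] and n ≥ 1. Set ρ_0 = ρ₊ and ρ_1 = ρ₋, and for each x ∈ {0,1}^n let σ_x(u, v) = ∏_{j=1}^n (N_γ(ρ_{x_j}))(u_j, v_j), indexed by {0,1}^n × {0,1}^n. Then the supremum, over all POVMs (Λ_x)_{x ∈ {0,1}^n} on ℂ^{2^n}, of the average success probability 2^{−n} · Σ_{x ∈ {0,1}^n} Re Tr(Λ_x σ_x) equals ((1 + √(1−γ))/2)^n, i.e., the n-th power of the optimal single-use success probability. -/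
open Matrix Complex
open scoped ComplexOrder

/-- The encoding `0 ↦ ρ₊`, `1 ↦ ρ₋`. -/
noncomputable def ρbit (i : Fin 2) : Matrix (Fin 2) (Fin 2) ℂ :=
  if i = 0 then ρPlus else ρMinus

/-- The tensor-product channel output `N_γ(ρ_{x₁}) ⊗ ⋯ ⊗ N_γ(ρ_{xₙ})` for the uncoded word
`x ∈ {0,1}ⁿ`, realized as a matrix indexed by `{0,1}ⁿ` with entrywise products. -/
noncomputable def σout (γ : ℝ) (n : ℕ) (x : Fin n → Fin 2) :
    Matrix (Fin n → Fin 2) (Fin n → Fin 2) ℂ :=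
  Matrix.of fun u v => ∏ j, (ADC γ (ρbit (x j))) (u j) (v j)

/-- The tensor-product measurement operator `ρ_{x₁} ⊗ ⋯ ⊗ ρ_{xₙ}` (individual optimal
single-use measurements). -/
noncomputable def Pind (n : ℕ) (x : Fin n → Fin 2) :
    Matrix (Fin n → Fin 2) (Fin n → Fin 2) ℂ :=
  Matrix.of fun u v => ∏ j, (ρbit (x j)) (u j) (v j)

/-! ### Auxiliary tensor-product machinery -/

open scoped MatrixOrder Matrix.Norms.L2Operator in
lemma Matrix.posSemidef_iff_eq_transpose_mul_self {m : Type*} [Fintype m] [DecidableEq m]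
    {A : Matrix m m ℂ} : A.PosSemidef ↔ ∃ B : Matrix m m ℂ, A = Bᴴ * B := by
  constructor
  · intro h
    obtain ⟨B, hB⟩ := CStarAlgebra.nonneg_iff_eq_star_mul_self.mp h.nonneg
    exact ⟨B, hB⟩
  · rintro ⟨B, rfl⟩
    exact Matrix.posSemidef_conjTranspose_mul_self B

noncomputable def tens {n : ℕ} (A : Fin n → Matrix (Fin 2) (Fin 2) ℂ) :
    Matrix (Fin n → Fin 2) (Fin n → Fin 2) ℂ :=
  Matrix.of fun u v => ∏ j, A j (u j) (v j)

lemma tens_mul {n : ℕ} (A B : Fin n → Matrix (Fin 2) (Fin 2) ℂ) :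
    tens A * tens B = tens (fun j => A j * B j) := by
  ext u v
  simp only [tens, Matrix.mul_apply, Matrix.of_apply]
  rw [Fintype.prod_sum (f := fun j k => A j (u j) k * B j k (v j))]
  exact Finset.sum_congr rfl fun x _ => Finset.prod_mul_distrib.symm

lemma tens_trace {n : ℕ} (A : Fin n → Matrix (Fin 2) (Fin 2) ℂ) :
    (tens A).trace = ∏ j, (A j).trace := by
  simp only [Matrix.trace, Matrix.diag, tens, Matrix.of_apply]
  rw [Fintype.prod_sum (f := fun j k => A j k k)]

lemma tens_conjTranspose {n : ℕ} (A : Fin n → Matrix (Fin 2) (Fin 2) ℂ) :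
    (tens A)ᴴ = tens (fun j => (A j)ᴴ) := by
  ext u v
  simp only [tens, Matrix.conjTranspose_apply, Matrix.of_apply, star_prod]

lemma tens_one {n : ℕ} : tens (fun _ : Fin n => (1 : Matrix (Fin 2) (Fin 2) ℂ)) = 1 := by
  ext u v
  simp only [tens, Matrix.of_apply, Matrix.one_apply]
  by_cases h : u = v
  · subst h; simp
  · rw [if_neg h]
    obtain ⟨j, hj⟩ := Function.ne_iff.mp h
    exact Finset.prod_eq_zero (Finset.mem_univ j) (if_neg hj)

lemma tens_posSemidef {n : ℕ} (A : Fin n → Matrix (Fin 2) (Fin 2) ℂ)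
    (h : ∀ j, (A j).PosSemidef) : (tens A).PosSemidef := by
  choose B hB using fun j => (Matrix.posSemidef_iff_eq_transpose_mul_self).mp (h j)
  rw [show A = fun j => (B j)ᴴ * B j from funext hB, ← tens_mul, ← tens_conjTranspose]
  exact Matrix.posSemidef_conjTranspose_mul_self _

lemma tens_sum {n : ℕ} (F : Fin n → Fin 2 → Matrix (Fin 2) (Fin 2) ℂ) :
    ∑ x : Fin n → Fin 2, tens (fun j => F j (x j)) = tens (fun j => ∑ i, F j i) := by
  ext u v
  simp only [tens, Matrix.sum_apply, Matrix.of_apply]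
  rw [Fintype.prod_sum (f := fun j i => F j i (u j) (v j))]

lemma tens_sub_single {n : ℕ} (F G : Fin n → Matrix (Fin 2) (Fin 2) ℂ) (j : Fin n)
    (h : ∀ k, k ≠ j → F k = G k) :
    tens F - tens G = tens (Function.update F j (F j - G j)) := by
  ext u v
  simp only [tens, Matrix.sub_apply, Matrix.of_apply]
  rw [← Finset.mul_prod_erase Finset.univ _ (Finset.mem_univ j),
      ← Finset.mul_prod_erase Finset.univ _ (Finset.mem_univ j),
      ← Finset.mul_prod_erase Finset.univ
        (f := fun k => Function.update F j (F j - G j) k (u k) (v k)) (Finset.mem_univ j)]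
  have h1 : ∀ k ∈ Finset.univ.erase j,
      G k (u k) (v k) = F k (u k) (v k) := by
    intro k hk
    rw [h k (Finset.mem_erase.mp hk).1]
  have h2 : ∀ k ∈ Finset.univ.erase j,
      Function.update F j (F j - G j) k (u k) (v k) = F k (u k) (v k) := by
    intro k hk
    rw [Function.update_of_ne (Finset.mem_erase.mp hk).1]
  rw [Finset.prod_congr rfl h1, Finset.prod_congr rfl h2, Function.update_self]
  simp only [Matrix.sub_apply]
  ring

lemma tens_sub_psd {n : ℕ} (Y A : Fin n → Matrix (Fin 2) (Fin 2) ℂ)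
    (hY : ∀ j, (Y j).PosSemidef) (hA : ∀ j, (A j).PosSemidef)
    (hYA : ∀ j, (Y j - A j).PosSemidef) : (tens Y - tens A).PosSemidef := by
  have key : ∀ S : Finset (Fin n),
      (tens (fun j => if j ∈ S then Y j else A j) - tens A).PosSemidef := by
    intro S
    induction S using Finset.induction_on with
    | empty =>
        simp only [Finset.notMem_empty, if_false, sub_self]
        exact Matrix.PosSemidef.zero
    | @insert a S ha ih =>
        have step : (tens (fun j => if j ∈ insert a S then Y j else A j) -
            tens (fun j => if j ∈ S then Y j else A j)).PosSemidef := by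
          rw [tens_sub_single _ _ a (fun k hk => by
            simp [Finset.mem_insert, hk])]
          apply tens_posSemidef
          intro k
          by_cases hk : k = a
          · subst hk
            rw [Function.update_self]
            simpa [ha] using hYA k
          · rw [Function.update_of_ne hk]
            by_cases hkS : k ∈ insert a S <;> simp [hkS] <;> [exact hY k; exact hA k]
        have := step.add ih
        rwa [sub_add_sub_cancel] at this
  have := key Finset.univ
  simpa using this

lemma psd_trace_re_nonneg {m : Type*} [Fintype m] [DecidableEq m] {M : Matrix m m ℂ}
    (hM : M.PosSemidef) : 0 ≤ M.trace.re := by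
  have hdiag : ∀ i, 0 ≤ M i i := by
    intro i
    exact hM.diag_nonneg
  have : (0 : ℂ) ≤ M.trace := Finset.sum_nonneg fun i _ => hdiag i
  exact (Complex.le_def.mp this).1

lemma psd_mul_trace_re_nonneg {m : Type*} [Fintype m] [DecidableEq m]
    {A B : Matrix m m ℂ} (hA : A.PosSemidef) (hB : B.PosSemidef) :
    0 ≤ (A * B).trace.re := by
  obtain ⟨C, rfl⟩ := Matrix.posSemidef_iff_eq_transpose_mul_self.mp hB
  have h1 : (A * (Cᴴ * C)).trace = (C * A * Cᴴ).trace := by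
    rw [← Matrix.mul_assoc, Matrix.trace_mul_cycle]
  rw [h1]
  exact psd_trace_re_nonneg (hA.mul_mul_conjTranspose_same C)

/-! ### Single-qubit computations -/

lemma ADC_plus (γ : ℝ) (hγ0 : 0 ≤ γ) (hγ1 : γ ≤ 1) :
    ADC γ ρPlus = (1/2 : ℂ) •
      !![((1 + γ : ℝ) : ℂ), (Real.sqrt (1-γ) : ℂ); (Real.sqrt (1-γ) : ℂ), ((1 - γ : ℝ) : ℂ)] := by
  have h1 : (Real.sqrt γ : ℂ) * (Real.sqrt γ : ℂ) = (γ : ℂ) := by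
    rw [← Complex.ofReal_mul, Real.mul_self_sqrt hγ0]
  have h2 : (Real.sqrt (1-γ) : ℂ) * (Real.sqrt (1-γ) : ℂ) = ((1-γ : ℝ) : ℂ) := by
    rw [← Complex.ofReal_mul, Real.mul_self_sqrt (by linarith)]
  ext i j
  fin_cases i <;> fin_cases j <;>
    simp [ADC, K₀, K₁, ρPlus, Matrix.mul_apply, Fin.sum_univ_two, Matrix.vecMul,
      dotProduct, Matrix.conjTranspose_apply, Complex.conj_ofReal] <;>
    push_cast <;> ring_nf <;>
    rw [sq] <;> first
      | rw [h1]
      | (rw [h2]; push_cast; ring)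

lemma ADC_minus (γ : ℝ) (hγ0 : 0 ≤ γ) (hγ1 : γ ≤ 1) :
    ADC γ ρMinus = (1/2 : ℂ) •
      !![((1 + γ : ℝ) : ℂ), -(Real.sqrt (1-γ) : ℂ); -(Real.sqrt (1-γ) : ℂ), ((1 - γ : ℝ) : ℂ)] := by
  have h1 : (Real.sqrt γ : ℂ) * (Real.sqrt γ : ℂ) = (γ : ℂ) := by
    rw [← Complex.ofReal_mul, Real.mul_self_sqrt hγ0]
  have h2 : (Real.sqrt (1-γ) : ℂ) * (Real.sqrt (1-γ) : ℂ) = ((1-γ : ℝ) : ℂ) := by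
    rw [← Complex.ofReal_mul, Real.mul_self_sqrt (by linarith)]
  ext i j
  fin_cases i <;> fin_cases j <;>
    simp [ADC, K₀, K₁, ρMinus, Matrix.mul_apply, Fin.sum_univ_two, Matrix.vecMul,
      dotProduct, Matrix.conjTranspose_apply, Complex.conj_ofReal] <;>
    ring_nf <;>
    rw [sq] <;> first
      | rw [h1]
      | (rw [h2]; push_cast; ring)

noncomputable def Yq (γ : ℝ) : Matrix (Fin 2) (Fin 2) ℂ :=
  Matrix.diagonal ![(((1 + γ + Real.sqrt (1-γ)) / 2 : ℝ) : ℂ),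
                    (((1 - γ + Real.sqrt (1-γ)) / 2 : ℝ) : ℂ)]

lemma Yq_psd (γ : ℝ) (hγ0 : 0 ≤ γ) (hγ1 : γ ≤ 1) : (Yq γ).PosSemidef := by
  refine Matrix.PosSemidef.diagonal fun i => ?_
  have hs : 0 ≤ Real.sqrt (1-γ) := Real.sqrt_nonneg _
  fin_cases i <;>
    · simp only [Matrix.cons_val_zero, Matrix.cons_val_one, Matrix.head_cons]
      rw [Complex.le_def]
      constructor <;> simp <;> linarith

lemma Yq_trace (γ : ℝ) : (Yq γ).trace = (((1 + Real.sqrt (1-γ)) : ℝ) : ℂ) := by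
  simp [Yq, Matrix.trace, Matrix.diag, Fin.sum_univ_two]
  push_cast
  ring

lemma Yq_sub_plus (γ : ℝ) (hγ0 : 0 ≤ γ) (hγ1 : γ ≤ 1) :
    Yq γ - ADC γ ρPlus = ((Real.sqrt (1-γ) : ℝ) : ℂ) • ρMinus := by
  rw [ADC_plus γ hγ0 hγ1]
  ext i j
  fin_cases i <;> fin_cases j <;>
    simp [Yq, ρMinus, Matrix.diagonal] <;> push_cast <;> ring

lemma Yq_sub_minus (γ : ℝ) (hγ0 : 0 ≤ γ) (hγ1 : γ ≤ 1) :
    Yq γ - ADC γ ρMinus = ((Real.sqrt (1-γ) : ℝ) : ℂ) • ρPlus := by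
  rw [ADC_minus γ hγ0 hγ1]
  ext i j
  fin_cases i <;> fin_cases j <;>
    simp [Yq, ρPlus, Matrix.diagonal] <;> push_cast <;> ring

lemma smul_psd {m : Type*} [Fintype m] {c : ℝ} (hc : 0 ≤ c) {M : Matrix m m ℂ}
    (hM : M.PosSemidef) : ((c : ℂ) • M).PosSemidef := by
  constructor
  · unfold Matrix.IsHermitian
    rw [Matrix.conjTranspose_smul, hM.1.eq]
    congr 1
    simp [Complex.conj_ofReal]
  · exact (hM.smul (Complex.zero_le_real.mpr hc)).2

lemma rhoPlus_psd : ρPlus.PosSemidef := by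
  rw [show ρPlus = ρPlusᴴ * ρPlus by
    ext i j; fin_cases i <;> fin_cases j <;>
      simp [ρPlus, Matrix.mul_apply, Fin.sum_univ_two, Matrix.conjTranspose_apply, map_ofNat] <;> norm_num]
  exact Matrix.posSemidef_conjTranspose_mul_self _

lemma rhoMinus_psd : ρMinus.PosSemidef := by
  rw [show ρMinus = ρMinusᴴ * ρMinus by
    ext i j; fin_cases i <;> fin_cases j <;>
      simp [ρMinus, Matrix.mul_apply, Fin.sum_univ_two, Matrix.conjTranspose_apply,
        map_ofNat] <;> ring]
  exact Matrix.posSemidef_conjTranspose_mul_self _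

lemma rbit_psd (i : Fin 2) : (ρbit i).PosSemidef := by
  unfold ρbit; split <;> [exact rhoPlus_psd; exact rhoMinus_psd]

lemma ADC_psd (γ : ℝ) {ρ : Matrix (Fin 2) (Fin 2) ℂ} (h : ρ.PosSemidef) :
    (ADC γ ρ).PosSemidef :=
  (h.mul_mul_conjTranspose_same (K₀ γ)).add (h.mul_mul_conjTranspose_same (K₁ γ))

lemma rbit_sum : ρPlus + ρMinus = 1 := by
  ext i j
  fin_cases i <;> fin_cases j <;> simp [ρPlus, ρMinus, Matrix.one_apply] <;> norm_num

lemma trace_rbit_ADC (γ : ℝ) (hγ0 : 0 ≤ γ) (hγ1 : γ ≤ 1) (i : Fin 2) :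
    (ρbit i * ADC γ (ρbit i)).trace = (((1 + Real.sqrt (1-γ)) / 2 : ℝ) : ℂ) := by
  have h0 : ρbit 0 = ρPlus := if_pos rfl
  have h1 : ρbit 1 = ρMinus := if_neg (by decide)
  fin_cases i
  · rw [show (⟨0, by norm_num⟩ : Fin 2) = 0 from rfl, h0, ADC_plus γ hγ0 hγ1]
    simp [ρPlus, Matrix.trace, Matrix.diag, Matrix.mul_apply, Fin.sum_univ_two]
    push_cast; ring
  · rw [show (⟨1, by norm_num⟩ : Fin 2) = 1 from rfl, h1, ADC_minus γ hγ0 hγ1]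
    simp [ρMinus, Matrix.trace, Matrix.diag, Matrix.mul_apply, Fin.sum_univ_two]
    push_cast; ring

lemma Yq_sub_ADC_psd (γ : ℝ) (hγ0 : 0 ≤ γ) (hγ1 : γ ≤ 1) (i : Fin 2) :
    (Yq γ - ADC γ (ρbit i)).PosSemidef := by
  unfold ρbit
  split
  · rw [Yq_sub_plus γ hγ0 hγ1]
    exact smul_psd (Real.sqrt_nonneg _) rhoMinus_psd
  · rw [Yq_sub_minus γ hγ0 hγ1]
    exact smul_psd (Real.sqrt_nonneg _) rhoPlus_psd

/-! ### Main theorem -/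

/-- uncoded collective optimum equals individual-measurement performance: the
supremum over all POVMs on `ℂ^{2ⁿ}` of the average success probability of the uncoded scheme
with inputs `ρ₊, ρ₋` over `n` uses of the ADC equals `((1 + √(1−γ))/2)ⁿ`, the `n`-th power of
the optimal single-use success probability (and it is attained). -/
theorem stmt12 (γ : ℝ) (hγ0 : 0 ≤ γ) (hγ1 : γ ≤ 1) (n : ℕ) (hn : 1 ≤ n) :
    IsGreatest
      {v : ℝ | ∃ Λ : (Fin n → Fin 2) → Matrix (Fin n → Fin 2) (Fin n → Fin 2) ℂ,
        (∀ x, (Λ x).PosSemidef) ∧ (∑ x, Λ x = 1) ∧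
        v = ((2 : ℝ) ^ n)⁻¹ * ∑ x, (Λ x * σout γ n x).trace.re}
      (((1 + Real.sqrt (1 - γ)) / 2) ^ n) := by
  have hσ : ∀ x : Fin n → Fin 2, σout γ n x = tens (fun j => ADC γ (ρbit (x j))) := fun _ => rfl
  have hP : ∀ x : Fin n → Fin 2, Pind n x = tens (fun j => ρbit (x j)) := fun _ => rfl
  have hcard : Fintype.card (Fin n → Fin 2) = 2 ^ n := by
    simp [Fintype.card_fun]
  constructor
  · -- membership : the product measurement achieves the value
    refine ⟨Pind n, ?_, ?_, ?_⟩
    · intro x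
      rw [hP x]
      exact tens_posSemidef _ fun j => rbit_psd (x j)
    · have := tens_sum (fun _ : Fin n => ρbit)
      simp only [← hP] at this
      rw [this, show (∑ i, ρbit i) = 1 by
        rw [Fin.sum_univ_two, show ρbit 0 = ρPlus from if_pos rfl,
          show ρbit 1 = ρMinus from if_neg (by decide), rbit_sum]]
      exact tens_one
    · have hval : ∀ x : Fin n → Fin 2,
          (Pind n x * σout γ n x).trace.re = ((1 + Real.sqrt (1 - γ)) / 2) ^ n := by
        intro x
        rw [hP x, hσ x, tens_mul, tens_trace]
        simp only [trace_rbit_ADC γ hγ0 hγ1]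
        rw [Finset.prod_const, Finset.card_univ, Fintype.card_fin,
          ← Complex.ofReal_pow, Complex.ofReal_re]
      rw [Finset.sum_congr rfl fun x _ => hval x, Finset.sum_const, Finset.card_univ, hcard]
      simp only [nsmul_eq_mul]
      push_cast
      rw [← mul_assoc, inv_mul_cancel₀ (by positivity), one_mul]
  · -- upper bound
    rintro v ⟨Λ, hpsd, hsum, rfl⟩
    set s := Real.sqrt (1 - γ) with hs
    have hYnn_psd : ∀ x : Fin n → Fin 2,
        (tens (fun _ : Fin n => Yq γ) - σout γ n x).PosSemidef := by
      intro x
      rw [hσ x]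
      exact tens_sub_psd _ _ (fun _ => Yq_psd γ hγ0 hγ1)
        (fun j => ADC_psd γ (rbit_psd (x j)))
        (fun j => Yq_sub_ADC_psd γ hγ0 hγ1 (x j))
    have key1 : ∀ x : Fin n → Fin 2,
        (Λ x * σout γ n x).trace.re ≤ (Λ x * tens (fun _ : Fin n => Yq γ)).trace.re := by
      intro x
      have h := psd_mul_trace_re_nonneg (hpsd x) (hYnn_psd x)
      rw [Matrix.mul_sub, Matrix.trace_sub, Complex.sub_re] at h
      linarith
    have key2 : ∑ x, (Λ x * tens (fun _ : Fin n => Yq γ)).trace.re = (1 + s) ^ n := by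
      have h1 : ∑ x, (Λ x * tens (fun _ : Fin n => Yq γ)).trace
          = (tens (fun _ : Fin n => Yq γ)).trace := by
        rw [← Matrix.trace_sum, ← Finset.sum_mul, hsum, one_mul]
      have h2 : (tens (fun _ : Fin n => Yq γ)).trace = (((1 + s) ^ n : ℝ) : ℂ) := by
        rw [tens_trace]
        simp only [Yq_trace]
        rw [Finset.prod_const, Finset.card_univ, Fintype.card_fin, ← Complex.ofReal_pow]
      calc ∑ x, (Λ x * tens (fun _ : Fin n => Yq γ)).trace.re
          = (∑ x, (Λ x * tens (fun _ : Fin n => Yq γ)).trace).re := by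
            rw [Complex.re_sum]
        _ = (1 + s) ^ n := by rw [h1, h2, Complex.ofReal_re]
    have hsumle : ∑ x, (Λ x * σout γ n x).trace.re ≤ (1 + s) ^ n := by
      rw [← key2]
      exact Finset.sum_le_sum fun x _ => key1 x
    have h2n : (0:ℝ) < (2:ℝ) ^ n := by positivity
    rw [div_pow]
    rw [div_eq_inv_mul]
    exact mul_le_mul_of_nonneg_left hsumle (by positivity)
end
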